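/- Every numerical semigroup S with concentration 2 satisfies Wilf's conjecture: g(S) ≤ (e(S) - 1) · n(S), where g(S) is the genus, e(S) the embedding dimension, and n(S) the number of elements of S smaller than the Frobenius number. -/

import Mathlib

open Set

/-- A numerical semigroup: contains 0, closed under addition, finite complement. -/
def IsNumSgp (S : Set ℕ) : Prop :=
  0 ∈ S ∧ (∀ a ∈ S, ∀ b ∈ S, a + b ∈ S) ∧ (Sᶜ : Set ℕ).Finite

/-- The multiplicity: least positive element. -/
noncomputable def mult (S : Set ℕ) : ℕ := sInf {n | n ∈ S ∧ n ≠ 0}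

/-- next_S(s) = min { x ∈ S | s < x }. -/
noncomputable def nextS (S : Set ℕ) (s : ℕ) : ℕ := sInf {x | x ∈ S ∧ s < x}

/-- The concentration C(S) = max { next_S(s) - s | s ∈ S \ {0} }. -/
noncomputable def conc (S : Set ℕ) : ℕ :=
  sSup {d | ∃ s ∈ S, s ≠ 0 ∧ d = nextS S s - s}

/-- The Frobenius number: largest gap. -/
noncomputable def frob (S : Set ℕ) : ℕ := sSup (Sᶜ : Set ℕ)

/-- The genus: number of gaps. -/
noncomputable def genus (S : Set ℕ) : ℕ := (Sᶜ : Set ℕ).ncard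

/-- x is a minimal generator of S. -/
def IsMinGen (S : Set ℕ) (x : ℕ) : Prop :=
  x ∈ S ∧ x ≠ 0 ∧ ¬∃ a ∈ S, ∃ b ∈ S, a ≠ 0 ∧ b ≠ 0 ∧ a + b = x

/-- The embedding dimension: number of minimal generators. -/
noncomputable def edim (S : Set ℕ) : ℕ := {x | IsMinGen S x}.ncard

/-- n(S): the number of elements of S smaller than the Frobenius number. -/
noncomputable def nS (S : Set ℕ) : ℕ := {s | s ∈ S ∧ s < frob S}.ncard

/-- The half-line Δ(m) = {0} ∪ {m, m+1, ...}. -/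
def Delta (m : ℕ) : Set ℕ := {0} ∪ {n | m ≤ n}

def IsHalfLine (S : Set ℕ) : Prop := ∃ m, S = Delta m

/-- An irreducible numerical semigroup. -/
def Irred (S : Set ℕ) : Prop :=
  ¬∃ T₁ T₂ : Set ℕ, IsNumSgp T₁ ∧ IsNumSgp T₂ ∧ S ⊂ T₁ ∧ S ⊂ T₂ ∧ S = T₁ ∩ T₂

section Basics
variable {S : Set ℕ}

/-- everything above the Frobenius number is in S -/
lemma big_mem (hS : IsNumSgp S) : ∀ x, frob S < x → x ∈ S := by
  intro x hx
  by_contra h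
  have : x ≤ frob S := le_csSup hS.2.2.bddAbove h
  omega

/-- if the complement is nonempty, frob is a gap -/
lemma frob_not_mem (hS : IsNumSgp S) (hne : (Sᶜ : Set ℕ).Nonempty) : frob S ∉ S :=
  Nat.sSup_mem hne hS.2.2.bddAbove

/-- the complement is nonempty when conc = 2 -/
lemma compl_nonempty (hS : IsNumSgp S) (hC : conc S = 2) : (Sᶜ : Set ℕ).Nonempty := by
  by_contra h
  rw [Set.not_nonempty_iff_eq_empty, Set.compl_empty_iff] at h
  subst h
  have hnext : ∀ s : ℕ, nextS Set.univ s = s + 1 := by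
    intro s
    have h1 : s + 1 ∈ {x : ℕ | x ∈ Set.univ ∧ s < x} := by simp
    have h2 : sInf {x : ℕ | x ∈ Set.univ ∧ s < x} ≤ s + 1 := Nat.sInf_le h1
    have h3 : sInf {x : ℕ | x ∈ Set.univ ∧ s < x} ∈ {x : ℕ | x ∈ Set.univ ∧ s < x} :=
      Nat.sInf_mem ⟨s + 1, h1⟩
    simp only [Set.mem_setOf_eq] at h3
    unfold nextS
    omega
  have hset : {d | ∃ s ∈ (Set.univ : Set ℕ), s ≠ 0 ∧ d = nextS Set.univ s - s} = {1} := by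
    ext d
    simp only [Set.mem_setOf_eq, Set.mem_singleton_iff]
    constructor
    · rintro ⟨s, -, hs0, rfl⟩; rw [hnext]; omega
    · rintro rfl; exact ⟨1, trivial, one_ne_zero, by rw [hnext]⟩
  unfold conc at hC
  rw [hset] at hC
  simp at hC

lemma one_not_mem (hS : IsNumSgp S) (hne : (Sᶜ : Set ℕ).Nonempty) : 1 ∉ S := by
  intro h1
  have hall : ∀ x, x ∈ S := by
    intro x
    induction x with
    | zero => exact hS.1
    | succ n ih => exact hS.2.1 n ih 1 h1
  obtain ⟨x, hx⟩ := hne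
  exact hx (hall x)

lemma mult_spec (hS : IsNumSgp S) (hC : conc S = 2) :
    mult S ∈ S ∧ 2 ≤ mult S ∧ (∀ s ∈ S, s ≠ 0 → mult S ≤ s) := by
  have hne := compl_nonempty hS hC
  have hbig := big_mem hS
  have hmem : frob S + 1 ∈ {n | n ∈ S ∧ n ≠ 0} := by
    refine ⟨hbig _ (by omega), by omega⟩
  have h := Nat.sInf_mem ⟨_, hmem⟩
  have h1 := one_not_mem hS hne
  obtain ⟨hmS, hm0⟩ := h
  refine ⟨hmS, ?_, fun s hs hs0 => Nat.sInf_le ⟨hs, hs0⟩⟩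
  have hne1 : mult S ≠ 1 := fun h => h1 (h ▸ hmS)
  have hne0 : mult S ≠ 0 := hm0
  omega

lemma nextS_mem (hS : IsNumSgp S) (hC : conc S = 2) (s : ℕ) :
    nextS S s ∈ S ∧ s < nextS S s ∧ ∀ y ∈ S, s < y → nextS S s ≤ y := by
  have hbig := big_mem hS
  have hmem : s + frob S + 1 ∈ {x | x ∈ S ∧ s < x} := ⟨hbig _ (by omega), by omega⟩
  have h := Nat.sInf_mem ⟨_, hmem⟩
  exact ⟨h.1, h.2, fun y hy hsy => Nat.sInf_le ⟨hy, hsy⟩⟩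

lemma conc_le (hS : IsNumSgp S) (hC : conc S = 2) :
    ∀ s ∈ S, s ≠ 0 → nextS S s ≤ s + 2 := by
  intro s hs hs0
  have hbig := big_mem hS
  have hbdd : BddAbove {d | ∃ s ∈ S, s ≠ 0 ∧ d = nextS S s - s} := by
    refine ⟨frob S + 2, ?_⟩
    rintro d ⟨u, hu, hu0, rfl⟩
    have hmem : u + frob S + 1 ∈ {x | x ∈ S ∧ u < x} := ⟨hbig _ (by omega), by omega⟩
    have := Nat.sInf_le hmem
    unfold nextS
    omega
  have hd : nextS S s - s ∈ {d | ∃ s ∈ S, s ≠ 0 ∧ d = nextS S s - s} := ⟨s, hs, hs0, rfl⟩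
  have := le_csSup hbdd hd
  unfold conc at hC
  omega

/-- isolated gaps: any gap above mult has neighbors in S -/
lemma iso (hS : IsNumSgp S) (hC : conc S = 2) {x : ℕ} (hx : mult S < x) (hxS : x ∉ S) :
    x - 1 ∈ S ∧ x + 1 ∈ S := by
  obtain ⟨hmS, hm2, -⟩ := mult_spec hS hC
  set T : Set ℕ := {y | y ∈ S ∧ y < x} with hT
  have hTne : T.Nonempty := ⟨mult S, hmS, hx⟩
  have hTbdd : BddAbove T := ⟨x, fun y hy => le_of_lt hy.2⟩
  have hs := Nat.sSup_mem hTne hTbdd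
  set s := sSup T with hsdef
  obtain ⟨hsS, hsx⟩ := hs
  have hms : mult S ≤ s := le_csSup hTbdd ⟨hmS, hx⟩
  have hnle : nextS S s ≤ s + 2 := conc_le hS hC s hsS (by omega)
  obtain ⟨hnS, hns, hnmin⟩ := nextS_mem hS hC s
  -- nextS S s ≥ x + 1
  have hge : x + 1 ≤ nextS S s := by
    rcases Nat.lt_or_ge (nextS S s) x with h | h
    · have : nextS S s ≤ s := le_csSup hTbdd ⟨hnS, h⟩
      omega
    · rcases Nat.eq_or_lt_of_le h with h' | h'
      · exact absurd (h' ▸ hnS) hxS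
      · omega
  have hsx1 : s = x - 1 := by omega
  have hnx1 : nextS S s = x + 1 := by omega
  exact ⟨hsx1 ▸ hsS, hnx1 ▸ hnS⟩

/-- there is a gap above mult, so frob ≥ mult + 1 -/
lemma frob_gt (hS : IsNumSgp S) (hC : conc S = 2) : mult S + 1 ≤ frob S := by
  obtain ⟨hmS, hm2, hmin⟩ := mult_spec hS hC
  have hbig := big_mem hS
  have hbdd : BddAbove {d | ∃ s ∈ S, s ≠ 0 ∧ d = nextS S s - s} := by
    refine ⟨frob S + 2, ?_⟩
    rintro d ⟨u, hu, hu0, rfl⟩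
    have hmem : u + frob S + 1 ∈ {x | x ∈ S ∧ u < x} := ⟨hbig _ (by omega), by omega⟩
    have := Nat.sInf_le hmem
    unfold nextS
    omega
  have hne : {d | ∃ s ∈ S, s ≠ 0 ∧ d = nextS S s - s}.Nonempty :=
    ⟨_, mult S, hmS, by omega, rfl⟩
  have h2 := Nat.sSup_mem hne hbdd
  rw [show sSup {d | ∃ s ∈ S, s ≠ 0 ∧ d = nextS S s - s} = conc S from rfl, hC] at h2
  obtain ⟨u, hu, hu0, hd⟩ := h2
  obtain ⟨hnS, hns, hnmin⟩ := nextS_mem hS hC u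
  have hnu : nextS S u = u + 2 := by omega
  have hgap : u + 1 ∉ S := by
    intro h
    have := hnmin (u + 1) h (by omega)
    omega
  have : u + 1 ≤ frob S := le_csSup hS.2.2.bddAbove hgap
  have := hmin u hu hu0
  omega

end Basics

section Counting
variable {S : Set ℕ}

open Classical in
lemma filter_split (s : Finset ℕ) (S : Set ℕ) :
    (s.filter (· ∈ S)).card + (s.filter (· ∉ S)).card = s.card := by
  classical
  have hu : s.filter (· ∈ S) ∪ s.filter (· ∉ S) = s := by
    ext x
    simp only [Finset.mem_union, Finset.mem_filter]
    tauto
  have hd : Disjoint (s.filter (· ∈ S)) (s.filter (· ∉ S)) := by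
    rw [Finset.disjoint_left]
    intro a ha hb
    simp only [Finset.mem_filter] at ha hb
    tauto
  rw [← Finset.card_union_of_disjoint hd, hu]

lemma genus_id (hS : IsNumSgp S) (hC : conc S = 2) : genus S + nS S = frob S + 1 := by
  classical
  have hne := compl_nonempty hS hC
  have hF := frob_not_mem hS hne
  set F := frob S with hFdef
  have hcompl : (Sᶜ : Set ℕ) = ↑((Finset.range (F+1)).filter (· ∉ S)) := by
    ext x
    simp only [Finset.coe_filter, Finset.mem_range, Set.mem_setOf_eq, Set.mem_compl_iff]
    constructor
    · intro hx
      have h' : x ≤ F := le_csSup hS.2.2.bddAbove hx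
      exact ⟨by omega, hx⟩
    · exact fun h => h.2
  have hns : {s | s ∈ S ∧ s < F} = ↑((Finset.range F).filter (· ∈ S)) := by
    ext x
    simp only [Finset.coe_filter, Finset.mem_range, Set.mem_setOf_eq]
    tauto
  have h1 : genus S = ((Finset.range (F+1)).filter (· ∉ S)).card := by
    rw [genus, hcompl, Set.ncard_coe_finset]
  have h2 : nS S = ((Finset.range F).filter (· ∈ S)).card := by
    rw [nS, ← hFdef, hns, Set.ncard_coe_finset]
  have h3 : (Finset.range (F+1)).filter (· ∈ S) = (Finset.range F).filter (· ∈ S) := by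
    ext x
    simp only [Finset.mem_filter, Finset.mem_range]
    constructor
    · rintro ⟨h, hx⟩
      refine ⟨?_, hx⟩
      rcases Nat.lt_or_ge x F with h' | h'
      · exact h'
      · have hxF : x = F := by omega
        exact absurd (hxF ▸ hx) hF
    · exact fun ⟨h, hx⟩ => ⟨by omega, hx⟩
  have h4 := filter_split (Finset.range (F+1)) S
  rw [Finset.card_range] at h4
  rw [h1, h2, ← h3]
  omega

lemma count_n (hS : IsNumSgp S) (hC : conc S = 2) :
    frob S + 3 ≤ 2 * nS S + mult S := by
  classical
  have hne := compl_nonempty hS hC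
  have hF := frob_not_mem hS hne
  obtain ⟨hmS, hm2, hmin⟩ := mult_spec hS hC
  have hmF := frob_gt hS hC
  set m := mult S with hmdef
  set F := frob S with hFdef
  set Wi := (Finset.Ico (m+1) F).filter (· ∈ S) with hWi
  set Ti := (Finset.Ico (m+1) F).filter (· ∉ S) with hTi
  set W := (Finset.Ico m F).filter (· ∈ S) with hW
  set T := (Finset.Ico (m+1) (F+1)).filter (· ∉ S) with hT
  have hWins : W = insert m Wi := by
    ext x
    simp only [hW, hWi, Finset.mem_filter, Finset.mem_Ico, Finset.mem_insert]
    constructor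
    · rintro ⟨⟨h1, h2⟩, h3⟩
      rcases Nat.eq_or_lt_of_le h1 with h' | h'
      · exact Or.inl h'.symm
      · exact Or.inr ⟨⟨by omega, h2⟩, h3⟩
    · rintro (rfl | ⟨⟨h1, h2⟩, h3⟩)
      · exact ⟨⟨le_refl _, by omega⟩, hmS⟩
      · exact ⟨⟨by omega, h2⟩, h3⟩
  have hTins : T = insert F Ti := by
    ext x
    simp only [hT, hTi, Finset.mem_filter, Finset.mem_Ico, Finset.mem_insert]
    constructor
    · rintro ⟨⟨h1, h2⟩, h3⟩
      rcases Nat.lt_or_ge x F with h' | h'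
      · exact Or.inr ⟨⟨h1, h'⟩, h3⟩
      · exact Or.inl (by omega)
    · rintro (rfl | ⟨⟨h1, h2⟩, h3⟩)
      · exact ⟨⟨by omega, by omega⟩, hF⟩
      · exact ⟨⟨h1, by omega⟩, h3⟩
  have hmWi : m ∉ Wi := by
    simp only [hWi, Finset.mem_filter, Finset.mem_Ico]
    omega
  have hFTi : F ∉ Ti := by
    simp only [hTi, Finset.mem_filter, Finset.mem_Ico]
    omega
  have hWcard : W.card = Wi.card + 1 := by
    rw [hWins, Finset.card_insert_of_notMem hmWi]
  have hTcard : T.card = Ti.card + 1 := by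
    rw [hTins, Finset.card_insert_of_notMem hFTi]
  have hsplit : Wi.card + Ti.card = F - m - 1 := by
    have h := filter_split (Finset.Ico (m+1) F) S
    rw [Nat.card_Ico] at h
    rw [hWi, hTi]
    omega
  -- injection T → W via x ↦ x - 1
  have hinj : T.card ≤ W.card := by
    apply Finset.card_le_card_of_injOn (fun x => x - 1)
    · intro a ha
      simp only [hT, Finset.mem_coe, Finset.mem_filter, Finset.mem_Ico] at ha
      obtain ⟨⟨h1, h2⟩, h3⟩ := ha
      have h4 := (iso hS hC (x := a) (by omega) h3).1
      simp only [hW, Finset.mem_coe, Finset.mem_filter, Finset.mem_Ico]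
      exact ⟨⟨by omega, by omega⟩, h4⟩
    · intro a ha b hb hab
      simp only [hT, Finset.coe_filter, Finset.mem_Ico, Set.mem_setOf_eq] at ha hb
      simp only at hab
      omega
  -- nS = W.card + 1
  have hnS : nS S = W.card + 1 := by
    have hset : {s | s ∈ S ∧ s < F} = ↑(insert 0 W) := by
      ext x
      simp only [Finset.coe_insert, Set.mem_insert_iff, hW, Finset.coe_filter,
        Finset.mem_Ico, Set.mem_setOf_eq]
      constructor
      · rintro ⟨hx, hxF⟩
        by_cases hx0 : x = 0
        · exact Or.inl hx0
        · exact Or.inr ⟨⟨hmin x hx hx0, hxF⟩, hx⟩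
      · rintro (rfl | ⟨⟨h1, h2⟩, h3⟩)
        · exact ⟨hS.1, by omega⟩
        · exact ⟨h3, h2⟩
    have h0W : (0 : ℕ) ∉ W := by
      simp only [hW, Finset.mem_filter, Finset.mem_Ico]
      omega
    rw [nS, ← hFdef, hset, Set.ncard_coe_finset, Finset.card_insert_of_notMem h0W]
  omega

end Counting

section Gens
variable {S : Set ℕ}

lemma mingen_finite (hS : IsNumSgp S) (hC : conc S = 2) : {x | IsMinGen S x}.Finite := by
  obtain ⟨hmS, hm2, hmin⟩ := mult_spec hS hC
  have hbig := big_mem hS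
  apply Set.Finite.subset (Set.finite_Iio (frob S + mult S + 1))
  intro x hx
  obtain ⟨hxS, hx0, hdec⟩ := hx
  simp only [Set.mem_Iio]
  by_contra h
  push_neg at h
  exact hdec ⟨mult S, hmS, x - mult S, hbig _ (by omega), by omega, by omega, by omega⟩

lemma genA (hS : IsNumSgp S) (hC : conc S = 2) {x : ℕ}
    (hxS : x ∈ S) (h1 : mult S ≤ x) (h2 : x < 2 * mult S) : IsMinGen S x := by
  obtain ⟨hmS, hm2, hmin⟩ := mult_spec hS hC
  refine ⟨hxS, by omega, ?_⟩
  rintro ⟨a, ha, b, hb, ha0, hb0, hab⟩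
  have := hmin a ha ha0
  have := hmin b hb hb0
  omega

/-- the least element of S not divisible by d is a minimal generator -/
lemma Zlemma (hS : IsNumSgp S) (hC : conc S = 2) {d : ℕ} (hd : 2 ≤ d) :
    ∃ z, IsMinGen S z ∧ ¬ d ∣ z ∧ ∀ y ∈ S, ¬ d ∣ y → z ≤ y := by
  have hbig := big_mem hS
  have hne' : {x | x ∈ S ∧ ¬ d ∣ x}.Nonempty := by
    by_cases h1 : d ∣ frob S + 1
    · refine ⟨frob S + 2, hbig _ (by omega), ?_⟩
      intro h2
      have hd1 : d ∣ 1 := by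
        have := Nat.dvd_sub h2 h1
        simpa using this
      have := Nat.le_of_dvd one_pos hd1
      omega
    · exact ⟨frob S + 1, hbig _ (by omega), h1⟩
  have hz := Nat.sInf_mem hne'
  set z := sInf {x | x ∈ S ∧ ¬ d ∣ x} with hzdef
  obtain ⟨hzS, hzd⟩ := hz
  have hz0 : z ≠ 0 := by
    intro h
    rw [h] at hzd
    exact hzd (dvd_zero d)
  refine ⟨z, ⟨hzS, hz0, ?_⟩, hzd, fun y hy hyd => Nat.sInf_le ⟨hy, hyd⟩⟩
  rintro ⟨a, ha, b, hb, ha0, hb0, hab⟩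
  by_cases hda : d ∣ a
  · have hdb : ¬ d ∣ b := by
      intro hdb
      exact hzd (hab ▸ Nat.dvd_add hda hdb)
    have := Nat.sInf_le (show b ∈ {x | x ∈ S ∧ ¬ d ∣ x} from ⟨hb, hdb⟩)
    omega
  · have := Nat.sInf_le (show a ∈ {x | x ∈ S ∧ ¬ d ∣ x} from ⟨ha, hda⟩)
    omega

lemma edim_ge_two (hS : IsNumSgp S) (hC : conc S = 2) : 2 ≤ edim S := by
  obtain ⟨hmS, hm2, hmin⟩ := mult_spec hS hC
  obtain ⟨z, hzgen, hzd, -⟩ := Zlemma hS hC (d := mult S) hm2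
  have hmgen : IsMinGen S (mult S) := genA hS hC hmS (le_refl _) (by omega)
  have hzm : z ≠ mult S := by
    intro h
    exact hzd (h ▸ dvd_refl _)
  have hsub : {z, mult S} ⊆ {x | IsMinGen S x} := by
    rintro x (rfl | rfl)
    · exact hzgen
    · exact hmgen
  calc 2 = ({z, mult S} : Set ℕ).ncard := (Set.ncard_pair hzm).symm
    _ ≤ edim S := Set.ncard_le_ncard hsub (mingen_finite hS hC)

lemma edim_ge_three_aux (hS : IsNumSgp S) (hC : conc S = 2) {a b c : ℕ}
    (hab : a ≠ b) (hac : a ≠ c) (hbc : b ≠ c)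
    (ha : IsMinGen S a) (hb : IsMinGen S b) (hcg : IsMinGen S c) : 3 ≤ edim S := by
  have hsub : {a, b, c} ⊆ {x | IsMinGen S x} := by
    rintro x (rfl | rfl | rfl)
    · exact ha
    · exact hb
    · exact hcg
  have h3 : ({a, b, c} : Set ℕ).ncard = 3 := by
    rw [Set.ncard_insert_of_notMem (by simp [hab, hac]), Set.ncard_pair hbc]
  calc 3 = ({a, b, c} : Set ℕ).ncard := h3.symm
    _ ≤ edim S := Set.ncard_le_ncard hsub (mingen_finite hS hC)

lemma count_e1 (hS : IsNumSgp S) (hC : conc S = 2) : mult S ≤ 2 * edim S := by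
  classical
  obtain ⟨hmS, hm2, hmin⟩ := mult_spec hS hC
  set m := mult S with hmdef
  set Vi := (Finset.Ico (m+1) (2*m)).filter (· ∈ S) with hVi
  set U := (Finset.Ico (m+1) (2*m)).filter (· ∉ S) with hU
  set V := (Finset.Ico m (2*m)).filter (· ∈ S) with hV
  have hVins : V = insert m Vi := by
    ext x
    simp only [hV, hVi, Finset.mem_filter, Finset.mem_Ico, Finset.mem_insert]
    constructor
    · rintro ⟨⟨h1, h2⟩, h3⟩
      rcases Nat.eq_or_lt_of_le h1 with h' | h'
      · exact Or.inl h'.symm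
      · exact Or.inr ⟨⟨by omega, h2⟩, h3⟩
    · rintro (rfl | ⟨⟨h1, h2⟩, h3⟩)
      · exact ⟨⟨le_refl _, by omega⟩, hmS⟩
      · exact ⟨⟨by omega, h2⟩, h3⟩
  have hmVi : m ∉ Vi := by
    simp only [hVi, Finset.mem_filter, Finset.mem_Ico]
    omega
  have hVcard : V.card = Vi.card + 1 := by
    rw [hVins, Finset.card_insert_of_notMem hmVi]
  have hsplit : Vi.card + U.card = m - 1 := by
    have h := filter_split (Finset.Ico (m+1) (2*m)) S
    rw [Nat.card_Ico] at h
    rw [hVi, hU]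
    omega
  have hinj : U.card ≤ V.card := by
    apply Finset.card_le_card_of_injOn (fun x => x - 1)
    · intro a ha
      simp only [hU, Finset.mem_coe, Finset.mem_filter, Finset.mem_Ico] at ha
      obtain ⟨⟨h1, h2⟩, h3⟩ := ha
      have h4 := (iso hS hC (x := a) (by omega) h3).1
      simp only [hV, Finset.mem_coe, Finset.mem_filter, Finset.mem_Ico]
      exact ⟨⟨by omega, by omega⟩, h4⟩
    · intro a ha b hb hab
      simp only [hU, Finset.coe_filter, Finset.mem_Ico, Set.mem_setOf_eq] at ha hb
      simp only at hab
      omega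
  have hVe : V.card ≤ edim S := by
    have hsub : ↑V ⊆ {x | IsMinGen S x} := by
      intro x hx
      simp only [hV, Finset.coe_filter, Finset.mem_Ico, Set.mem_setOf_eq] at hx
      exact genA hS hC hx.2 hx.1.1 hx.1.2
    calc V.card = (↑V : Set ℕ).ncard := (Set.ncard_coe_finset V).symm
      _ ≤ edim S := Set.ncard_le_ncard hsub (mingen_finite hS hC)
  omega

lemma count_e2 (hS : IsNumSgp S) (hC : conc S = 2) (hF2m : frob S < 2 * mult S) :
    nS S + 2 * mult S ≤ edim S + frob S + 2 := by
  classical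
  have hne := compl_nonempty hS hC
  have hFn := frob_not_mem hS hne
  obtain ⟨hmS, hm2, hmin⟩ := mult_spec hS hC
  have hmF := frob_gt hS hC
  have hbig := big_mem hS
  set m := mult S with hmdef
  set F := frob S with hFdef
  set W := (Finset.Ico m F).filter (· ∈ S) with hW
  set V := (Finset.Ico m (2*m)).filter (· ∈ S) with hV
  -- as in count_n : nS = W.card + 1
  have hnS : nS S = W.card + 1 := by
    have hset : {s | s ∈ S ∧ s < F} = ↑(insert 0 W) := by
      ext x
      simp only [Finset.coe_insert, Set.mem_insert_iff, hW, Finset.coe_filter,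
        Finset.mem_Ico, Set.mem_setOf_eq]
      constructor
      · rintro ⟨hx, hxF⟩
        by_cases hx0 : x = 0
        · exact Or.inl hx0
        · exact Or.inr ⟨⟨hmin x hx hx0, hxF⟩, hx⟩
      · rintro (rfl | ⟨⟨h1, h2⟩, h3⟩)
        · exact ⟨hS.1, by omega⟩
        · exact ⟨h3, h2⟩
    have h0W : (0 : ℕ) ∉ W := by
      simp only [hW, Finset.mem_filter, Finset.mem_Ico]
      omega
    rw [nS, ← hFdef, hset, Set.ncard_coe_finset, Finset.card_insert_of_notMem h0W]
  -- W ∪ Ico (F+1) (2m) ⊆ V, disjoint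
  have hsub : W ∪ Finset.Ico (F+1) (2*m) ⊆ V := by
    intro x hx
    simp only [Finset.mem_union, hW, Finset.mem_filter, Finset.mem_Ico] at hx
    simp only [hV, Finset.mem_filter, Finset.mem_Ico]
    rcases hx with ⟨⟨h1, h2⟩, h3⟩ | ⟨h1, h2⟩
    · exact ⟨⟨h1, by omega⟩, h3⟩
    · exact ⟨⟨by omega, h2⟩, hbig x (by omega)⟩
  have hdisj : Disjoint W (Finset.Ico (F+1) (2*m)) := by
    rw [Finset.disjoint_left]
    intro a ha hb
    simp only [hW, Finset.mem_filter, Finset.mem_Ico] at ha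
    simp only [Finset.mem_Ico] at hb
    omega
  have hcard : W.card + (2*m - (F+1)) ≤ V.card := by
    have h1 := Finset.card_le_card hsub
    rw [Finset.card_union_of_disjoint hdisj, Nat.card_Ico] at h1
    exact h1
  have hVe : V.card ≤ edim S := by
    have hsub' : ↑V ⊆ {x | IsMinGen S x} := by
      intro x hx
      simp only [hV, Finset.coe_filter, Finset.mem_Ico, Set.mem_setOf_eq] at hx
      exact genA hS hC hx.2 hx.1.1 hx.1.2
    calc V.card = (↑V : Set ℕ).ncard := (Set.ncard_coe_finset V).symm
      _ ≤ edim S := Set.ncard_le_ncard hsub' (mingen_finite hS hC)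
  omega

end Gens

section SmallM
variable {S : Set ℕ}

lemma m4_edim (hS : IsNumSgp S) (hC : conc S = 2) (hm : mult S = 4) : 3 ≤ edim S := by
  have h4S : (4 : ℕ) ∈ S := hm ▸ (mult_spec hS hC).1
  by_cases h5 : (5 : ℕ) ∈ S
  · have g4 : IsMinGen S 4 := genA hS hC h4S (by omega) (by omega)
    have g5 : IsMinGen S 5 := genA hS hC h5 (by omega) (by omega)
    by_cases h6 : (6 : ℕ) ∈ S
    · exact edim_ge_three_aux hS hC (by omega) (by omega) (by omega) g4 g5
        (genA hS hC h6 (by omega) (by omega))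
    · have h7 : (7 : ℕ) ∈ S := by
        have := (iso hS hC (x := 6) (by omega) h6).2
        simpa using this
      exact edim_ge_three_aux hS hC (by omega) (by omega) (by omega) g4 g5
        (genA hS hC h7 (by omega) (by omega))
  · have h6 : (6 : ℕ) ∈ S := by
      have := (iso hS hC (x := 5) (by omega) h5).2
      simpa using this
    obtain ⟨z, hzgen, hzd, -⟩ := Zlemma hS hC (d := 2) (by omega)
    have hz4 : z ≠ 4 := by rintro rfl; exact hzd ⟨2, rfl⟩
    have hz6 : z ≠ 6 := by rintro rfl; exact hzd ⟨3, rfl⟩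
    exact edim_ge_three_aux hS hC hz4 hz6 (by omega) hzgen
      (genA hS hC h4S (by omega) (by omega)) (genA hS hC h6 (by omega) (by omega))

lemma m3_edim (hS : IsNumSgp S) (hC : conc S = 2) (hm : mult S = 3)
    (hFe : Even (frob S)) : 3 ≤ edim S := by
  have h3S : (3 : ℕ) ∈ S := hm ▸ (mult_spec hS hC).1
  have hFn := frob_not_mem hS (compl_nonempty hS hC)
  have hmF := frob_gt hS hC
  have hbig := big_mem hS
  by_contra hlt
  push_neg at hlt
  have he2 : edim S = 2 := by
    have := edim_ge_two hS hC
    omega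
  obtain ⟨z, hzgen, hzd, -⟩ := Zlemma hS hC (d := 3) (by omega)
  have hzS : z ∈ S := hzgen.1
  have hz0 : z ≠ 0 := hzgen.2.1
  have hz3 : z ≠ 3 := by rintro rfl; exact hzd ⟨1, rfl⟩
  have hz6 : z ≠ 6 := by rintro rfl; exact hzd ⟨2, rfl⟩
  have hzge : 3 ≤ z := hm ▸ (mult_spec hS hC).2.2 z hzS hz0
  have g3 : IsMinGen S 3 := genA hS hC h3S (by omega) (by omega)
  -- the minimal generators are exactly {3, z}
  have hpair : ({3, z} : Set ℕ) = {x | IsMinGen S x} := by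
    apply Set.eq_of_subset_of_ncard_le
    · rintro x (rfl | rfl)
      · exact g3
      · exact hzgen
    · have h1 : ({3, z} : Set ℕ).ncard = 2 := Set.ncard_pair (by omega)
      have h2 : {x | IsMinGen S x}.ncard = 2 := he2
      omega
    · exact mingen_finite hS hC
  -- every element of S is a combination of 3 and z
  have rep : ∀ x, x ∈ S → ∃ a b, x = 3 * a + z * b := by
    intro x
    induction x using Nat.strong_induction_on with
    | _ x ih =>
      intro hx
      by_cases hx0 : x = 0
      · exact ⟨0, 0, by omega⟩
      by_cases hdec : ∃ a ∈ S, ∃ b ∈ S, a ≠ 0 ∧ b ≠ 0 ∧ a + b = x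
      · obtain ⟨a, ha, b, hb, ha0, hb0, hab⟩ := hdec
        obtain ⟨a1, b1, h1⟩ := ih a (by omega) ha
        obtain ⟨a2, b2, h2⟩ := ih b (by omega) hb
        exact ⟨a1 + a2, b1 + b2, by rw [← hab, h1, h2]; ring⟩
      · have hxgen : x ∈ {x | IsMinGen S x} := ⟨hx, hx0, hdec⟩
        rw [← hpair] at hxgen
        rcases hxgen with rfl | rfl
        · exact ⟨1, 0, by omega⟩
        · exact ⟨0, 1, by omega⟩
  have hz457 : z = 4 ∨ z = 5 ∨ 7 ≤ z := by omega
  rcases hz457 with rfl | rfl | hz7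
  · -- z = 4 : S = <3,4>, everything ≥ 6 is in S, so F = 4 or 5; F even gives F = 4 ∈ S
    have hall : ∀ x, 6 ≤ x → x ∈ S := by
      intro x
      induction x using Nat.strong_induction_on with
      | _ x ih =>
        intro hx6
        rcases Nat.lt_or_ge x 9 with h | h
        · interval_cases x
          · exact hS.2.1 3 h3S 3 h3S
          · exact hS.2.1 3 h3S 4 hzS
          · exact hS.2.1 4 hzS 4 hzS
        · have h1 : x - 3 ∈ S := ih (x - 3) (by omega) (by omega)
          have h2 := hS.2.1 (x - 3) h1 3 h3S
          have h3 : x - 3 + 3 = x := by omega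
          rwa [h3] at h2
    have hF6 : frob S < 6 := by
      by_contra h
      push_neg at h
      exact hFn (hall _ h)
    have hF4 : frob S = 4 := by
      obtain ⟨k, hk⟩ := hFe
      omega
    exact hFn (hF4 ▸ hzS)
  · -- z = 5 : S = <3,5>, so 6 ∈ S, everything ≥ 8 ∈ S, F even gives F = 4, but 7 ∉ S
    have h6S : (6 : ℕ) ∈ S := hS.2.1 3 h3S 3 h3S
    have hall : ∀ x, 8 ≤ x → x ∈ S := by
      intro x
      induction x using Nat.strong_induction_on with
      | _ x ih =>
        intro hx8
        rcases Nat.lt_or_ge x 11 with h | h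
        · interval_cases x
          · exact hS.2.1 3 h3S 5 hzS
          · exact hS.2.1 6 h6S 3 h3S
          · exact hS.2.1 5 hzS 5 hzS
        · have h1 : x - 3 ∈ S := ih (x - 3) (by omega) (by omega)
          have h2 := hS.2.1 (x - 3) h1 3 h3S
          have h3 : x - 3 + 3 = x := by omega
          rwa [h3] at h2
    have hF4 : frob S = 4 := by
      have hF8 : frob S < 8 := by
        by_contra h
        push_neg at h
        exact hFn (hall _ h)
      have hne6 : frob S ≠ 6 := fun h => hFn (h ▸ h6S)
      obtain ⟨k, hk⟩ := hFe
      omega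
    have h7S : (7 : ℕ) ∈ S := hbig 7 (by omega)
    obtain ⟨a, b, hab⟩ := rep 7 h7S
    omega
  · -- z ≥ 7 : then 4, 5 ∉ S but isolation forces 4 ∈ S
    have h5 : (5 : ℕ) ∉ S := by
      intro h
      obtain ⟨a, b, hab⟩ := rep 5 h
      rcases Nat.eq_zero_or_pos b with rfl | hb
      · omega
      · have : z ≤ z * b := Nat.le_mul_of_pos_right z hb
        omega
    have h4 : (4 : ℕ) ∈ S := by
      have := (iso hS hC (x := 5) (by omega) h5).1
      simpa using this
    obtain ⟨a, b, hab⟩ := rep 4 h4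
    rcases Nat.eq_zero_or_pos b with rfl | hb
    · omega
    · have : z ≤ z * b := Nat.le_mul_of_pos_right z hb
      omega

end SmallM

section Main
variable {S : Set ℕ}

lemma key_ineq (hS : IsNumSgp S) (hC : conc S = 2) :
    frob S + 1 ≤ edim S * nS S := by
  have E2 := count_n hS hC
  have E3 := count_e1 hS hC
  have E5 := edim_ge_two hS hC
  have hms := mult_spec hS hC
  have E6 : 2 ≤ mult S := hms.2.1
  have E7 := frob_gt hS hC
  have E8 : frob S ≠ 2 * mult S := by
    intro h
    have h2m : 2 * mult S ∈ S := by
      have := hS.2.1 (mult S) hms.1 (mult S) hms.1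
      rwa [show mult S + mult S = 2 * mult S by ring] at this
    exact frob_not_mem hS (compl_nonempty hS hC) (h ▸ h2m)
  set e := edim S with hedef
  set n := nS S with hndef
  set F := frob S with hFdef
  set m := mult S with hmdef
  have hmul2 : 2 * n ≤ e * n := Nat.mul_le_mul_right n E5
  have hm25 : m = 2 ∨ m = 3 ∨ m = 4 ∨ m = 5 ∨ 6 ≤ m := by omega
  rcases hm25 with hm | hm | hm | hm | hm
  · -- m = 2
    omega
  · -- m = 3
    rcases Nat.even_or_odd F with hFe | hFo
    · have E9 := m3_edim hS hC hm hFe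
      have hmul3 : 3 * n ≤ e * n := Nat.mul_le_mul_right n E9
      omega
    · obtain ⟨k, hk⟩ := hFo
      omega
  · -- m = 4
    have E10 := m4_edim hS hC hm
    have hmul3 : 3 * n ≤ e * n := Nat.mul_le_mul_right n E10
    omega
  · -- m = 5
    have he3 : 3 ≤ e := by omega
    have hmul3 : 3 * n ≤ e * n := Nat.mul_le_mul_right n he3
    rcases Nat.lt_or_ge F 8 with hF8 | hF8
    · -- F ∈ {6, 7}, elementary case
      have E4 := count_e2 hS hC (by omega)
      have hn2 : 2 ≤ n := by omega
      nlinarith [E4, E2, hn2, hF8, E7]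
    · omega
  · -- m ≥ 6
    rcases Nat.lt_or_ge F (2 * m) with hF2m | hF2m
    · -- elementary case
      have E4 := count_e2 hS hC hF2m
      have h1 : 0 ≤ 2 * n + m - F - 3 := by omega
      nlinarith [E2, E4, hm, E7, hF2m,
        mul_nonneg (show (0:ℤ) ≤ 2 * (n:ℤ) + m - F - 3 by omega)
          (show (0:ℤ) ≤ 2 * (n:ℤ) + 3 * m - F - 1 by omega),
        mul_nonneg (show (0:ℤ) ≤ (F:ℤ) - m + 1 by omega)
          (show (0:ℤ) ≤ 3 * (m:ℤ) - F - 7 by omega),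
        mul_nonneg (show (0:ℤ) ≤ (e:ℤ) + F + 2 - n - 2 * m by omega)
          (show (0:ℤ) ≤ (n:ℤ) by omega)]
    · have hF2m' : 2 * m + 1 ≤ F := by omega
      nlinarith [E2, E3, hm, hF2m',
        mul_nonneg (show (0:ℤ) ≤ 2 * (e:ℤ) - m by omega)
          (show (0:ℤ) ≤ 2 * (n:ℤ) - F + m - 3 by omega),
        mul_nonneg (show (0:ℤ) ≤ (m:ℤ) - 6 by omega)
          (show (0:ℤ) ≤ (F:ℤ) - 2 * m - 1 by omega)]

end Main


theorem stmt14 (S : Set ℕ) (hS : IsNumSgp S) (hC : conc S = 2) :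
    genus S ≤ (edim S - 1) * nS S := by
  have E1 := genus_id hS hC
  have key := key_ineq hS hC
  have hsub : (edim S - 1) * nS S = edim S * nS S - nS S := by
    rw [Nat.sub_one_mul]
  omega
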